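/- arXiv:1609.06166 — 3 statements merged into one kernel-verified Lean document; each statement's English description precedes it below -/
import Mathlib

section
/- Let n ≥ 2 be an integer. Then there exists a Laurent polynomial r_n ∈ ℤ[s,s⁻¹] such that sⁿ + s⁻ⁿ + n(s + s⁻¹) ≡ (1 + s)⁴ · r_n(s) modulo 2 in ℤ[s,s⁻¹], and moreover r_n(1) = n/2 if n is even, while r_n(1) = 0 if n is odd. -/
open LaurentPolynomial

/-- The Laurent polynomial obtained from `g` by substituting `s⁻¹` for `s`
(i.e. negating every exponent). -/
noncomputable def lbar (g : LaurentPolynomial ℤ) : LaurentPolynomial ℤ :=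
  AddMonoidAlgebra.ofCoeff (Finsupp.mapDomain (fun n : ℤ => -n) g.coeff)

/-- Evaluation of a Laurent polynomial at `s = 1`, i.e. the sum of its coefficients. -/
noncomputable def eval1 (g : LaurentPolynomial ℤ) : ℤ :=
  g.coeff.sum fun _ a => a

/-- The additive map `φ : ℤ[s,s⁻¹] → ℤ/2ℤ` determined by `φ(s^k) = k mod 2`;
equivalently, formal derivative followed by evaluation at `1` and reduction mod `2`. -/
noncomputable def phi (g : LaurentPolynomial ℤ) : ZMod 2 :=
  ((g.coeff.sum fun k a => a * k : ℤ) : ZMod 2)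

/-- Two Laurent polynomials are congruent modulo 2 if every coefficient of their
difference is even, i.e. the difference is `2` times a Laurent polynomial. -/
def cong2 (g h : LaurentPolynomial ℤ) : Prop := ∃ p, g - h = 2 * p

/-! ### Auxiliary machinery -/

/-- The exponent monoid hom for reduction mod 2. -/
noncomputable def TT : Multiplicative ℤ →* LaurentPolynomial (ZMod 2) where
  toFun k := T (Multiplicative.toAdd k)
  map_one' := T_zero
  map_mul' _ _ := T_add _ _

/-- Reduction of coefficients mod `2`. -/
noncomputable def pi2 : LaurentPolynomial ℤ →+* LaurentPolynomial (ZMod 2) :=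
  AddMonoidAlgebra.liftNCRingHom ((LaurentPolynomial.C).comp (Int.castRingHom (ZMod 2))) TT
    (fun _ _ => Commute.all _ _)

theorem pi2_single (k a : ℤ) : pi2 (AddMonoidAlgebra.single k a) = AddMonoidAlgebra.single k ((a : ZMod 2)) := by
  have h := AddMonoidAlgebra.liftNC_single
    (((LaurentPolynomial.C).comp (Int.castRingHom (ZMod 2)) : ℤ →+* LaurentPolynomial (ZMod 2)) :
      ℤ →+ LaurentPolynomial (ZMod 2)) (⇑TT) k a
  have : pi2 (AddMonoidAlgebra.single k a) = LaurentPolynomial.C ((a : ZMod 2)) * T k := h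
  rw [this, ← single_eq_C_mul_T]

theorem pi2_T (k : ℤ) : pi2 (T k) = T k := by
  have : (T k : LaurentPolynomial ℤ) = AddMonoidAlgebra.single k 1 := rfl
  rw [this, pi2_single]; rfl

theorem pi2_C (a : ℤ) : pi2 (LaurentPolynomial.C a) = LaurentPolynomial.C ((a : ZMod 2)) := by
  have h1 : (LaurentPolynomial.C a : LaurentPolynomial ℤ) = AddMonoidAlgebra.single 0 a := rfl
  have h2 : (LaurentPolynomial.C ((a : ZMod 2))) = AddMonoidAlgebra.single (0:ℤ) ((a : ZMod 2)) := rfl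
  rw [h1, h2, pi2_single]

theorem pi2_coeff (g : LaurentPolynomial ℤ) (k : ℤ) : (pi2 g).coeff k = ((g.coeff k : ℤ) : ZMod 2) := by
  induction g using AddMonoidAlgebra.induction_linear with
  | zero => simp
  | add f g hf hg =>
      rw [map_add]
      show (pi2 f + pi2 g).coeff k = _
      rw [AddMonoidAlgebra.coeff_add, Finsupp.add_apply, hf, hg]
      show _ = ((f.coeff k + g.coeff k : ℤ) : ZMod 2)
      push_cast; ring
  | single a b =>
      rw [pi2_single]
      rw [AddMonoidAlgebra.coeff_single, AddMonoidAlgebra.coeff_single, Finsupp.single_apply, Finsupp.single_apply]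
      split_ifs <;> simp

theorem cong2_of_pi2 {g h : LaurentPolynomial ℤ} (H : pi2 g = pi2 h) : cong2 g h := by
  set d : LaurentPolynomial ℤ := g - h with hd
  have hdvd : ∀ k, (2 : ℤ) ∣ d.coeff k := by
    intro k
    have h0 : pi2 d = 0 := by rw [hd, map_sub, H, sub_self]
    have hc : (pi2 d).coeff k = ((d.coeff k : ℤ) : ZMod 2) := pi2_coeff d k
    rw [h0] at hc
    have h2 : ((d.coeff k : ℤ) : ZMod 2) = 0 := by rw [← hc]; rfl
    exact_mod_cast (ZMod.intCast_zmod_eq_zero_iff_dvd (d.coeff k) 2).mp h2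
  refine ⟨AddMonoidAlgebra.ofCoeff (Finsupp.mapRange (fun a : ℤ => a / 2) (by norm_num) d.coeff), ?_⟩
  rw [two_mul]
  apply AddMonoidAlgebra.ext
  apply Finsupp.ext
  intro k
  show d.coeff k = Finsupp.mapRange (fun a : ℤ => a / 2) (by norm_num) d.coeff k + Finsupp.mapRange (fun a : ℤ => a / 2) (by norm_num) d.coeff k
  rw [Finsupp.mapRange_apply]
  have := hdvd k
  omega

/-- Evaluation at `1` as a ring hom. -/
noncomputable def ee : LaurentPolynomial ℤ →+* ℤ :=
  AddMonoidAlgebra.liftNCRingHom (RingHom.id ℤ) 1 (fun _ _ => Commute.all _ _)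

theorem ee_single (k a : ℤ) : ee (AddMonoidAlgebra.single k a) = a := by
  have h := AddMonoidAlgebra.liftNC_single ((RingHom.id ℤ : ℤ →+* ℤ) : ℤ →+ ℤ)
    (⇑(1 : Multiplicative ℤ →* ℤ)) k a
  have : ee (AddMonoidAlgebra.single k a) =
      (RingHom.id ℤ) a * (1 : Multiplicative ℤ →* ℤ) (Multiplicative.ofAdd k) := h
  rw [this]; simp

theorem eval1_eq_ee (g : LaurentPolynomial ℤ) : eval1 g = ee g := by
  induction g using AddMonoidAlgebra.induction_linear with
  | zero => simp [eval1]
  | add f g hf hg =>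
      rw [map_add, ← hf, ← hg, eval1, eval1, eval1, AddMonoidAlgebra.coeff_add,
        Finsupp.sum_add_index' (fun _ => rfl) (fun _ _ _ => rfl)]
  | single a b =>
      rw [ee_single, eval1, AddMonoidAlgebra.coeff_single, Finsupp.sum_single_index rfl]

theorem ee_T (k : ℤ) : ee (T k) = 1 := by
  have : (T k : LaurentPolynomial ℤ) = AddMonoidAlgebra.single k 1 := rfl
  rw [this, ee_single]

theorem ee_C (a : ℤ) : ee (LaurentPolynomial.C a) = a := by
  have : (LaurentPolynomial.C a : LaurentPolynomial ℤ) = AddMonoidAlgebra.single 0 a := rfl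
  rw [this, ee_single]

/-! ### Char 2 facts -/

noncomputable instance : CharP (LaurentPolynomial (ZMod 2)) 2 :=
  charP_of_injective_algebraMap' (ZMod 2) 2

theorem sq2 (a b : LaurentPolynomial (ZMod 2)) : (a + b) ^ 2 = a ^ 2 + b ^ 2 :=
  add_pow_char a b 2

theorem T_sq (k : ℤ) : (T k : LaurentPolynomial (ZMod 2)) ^ 2 = T (2 * k) := T_pow k 2

theorem one_add_T_pow_four :
    ((1 : LaurentPolynomial (ZMod 2)) + T 1) ^ 4 = 1 + T 4 := by
  have h2 : ((1 : LaurentPolynomial (ZMod 2)) + T 1) ^ 2 = 1 + T 2 := by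
    rw [sq2, one_pow, T_sq]; norm_num
  have h4 : ((1 : LaurentPolynomial (ZMod 2)) + T 1) ^ 4
      = (((1 : LaurentPolynomial (ZMod 2)) + T 1) ^ 2) ^ 2 := by ring
  rw [h4, h2, sq2, one_pow, T_sq]; norm_num

theorem geom2 (x : LaurentPolynomial (ZMod 2)) (M : ℕ) :
    (1 + x) * ∑ i ∈ Finset.range M, x ^ i = 1 + x ^ M := by
  have h := geom_sum_mul x M
  rw [CharTwo.sub_eq_add, CharTwo.sub_eq_add] at h
  rw [add_comm 1 x, add_comm 1 (x ^ M), mul_comm]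
  exact h

/-! ### The two key identities mod 2 -/

theorem keyEven (M : ℕ) :
    (T ((M : ℤ) + M) + T (-((M : ℤ) + M)) : LaurentPolynomial (ZMod 2)) =
      (1 + T 1) ^ 4 *
        (T (-((M : ℤ) + M)) *
          (∑ i ∈ Finset.range M, (T 2 : LaurentPolynomial (ZMod 2)) ^ i) ^ 2) := by
  have hs : (∑ i ∈ Finset.range M, (T 2 : LaurentPolynomial (ZMod 2)) ^ i) ^ 2
      = ∑ i ∈ Finset.range M, (T 4 : LaurentPolynomial (ZMod 2)) ^ i := by
    rw [sum_pow_char]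
    refine Finset.sum_congr rfl fun i _ => ?_
    rw [← pow_mul, mul_comm i 2, pow_mul, T_sq]
    norm_num
  rw [one_add_T_pow_four, hs]
  rw [show ((1 : LaurentPolynomial (ZMod 2)) + T 4) *
      (T (-((M : ℤ) + M)) * ∑ i ∈ Finset.range M, (T 4 : LaurentPolynomial (ZMod 2)) ^ i)
      = T (-((M : ℤ) + M)) *
        ((1 + T 4) * ∑ i ∈ Finset.range M, (T 4 : LaurentPolynomial (ZMod 2)) ^ i) by ring]
  rw [geom2, T_pow, mul_add, mul_one, ← T_add,
    show -((M : ℤ) + M) + (M : ℤ) * 4 = (M : ℤ) + M by ring]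
  ring

theorem keyOdd (M : ℕ) :
    (T (2 * (M : ℤ) + 1) + T (-(2 * (M : ℤ) + 1)) + (T 1 + T (-1)) : LaurentPolynomial (ZMod 2)) =
      (1 + T 1) ^ 4 *
        (T (-(2 * (M : ℤ) + 1)) *
          ((∑ i ∈ Finset.range M, (T 1 : LaurentPolynomial (ZMod 2)) ^ i) *
            (∑ i ∈ Finset.range (M + 1), (T 1 : LaurentPolynomial (ZMod 2)) ^ i)) ^ 2) := by
  set n : ℤ := 2 * (M : ℤ) + 1 with hn
  have hA : ((1 : LaurentPolynomial (ZMod 2)) + T 1) *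
      ∑ i ∈ Finset.range M, (T 1 : LaurentPolynomial (ZMod 2)) ^ i = 1 + T M := by
    rw [geom2, T_pow]; norm_num
  have hB : ((1 : LaurentPolynomial (ZMod 2)) + T 1) *
      ∑ i ∈ Finset.range (M + 1), (T 1 : LaurentPolynomial (ZMod 2)) ^ i
      = 1 + T ((M : ℤ) + 1) := by
    rw [geom2, T_pow]; push_cast; norm_num
  have key : ((1 : LaurentPolynomial (ZMod 2)) + T 1) ^ 4 *
      ((∑ i ∈ Finset.range M, (T 1 : LaurentPolynomial (ZMod 2)) ^ i) *
        (∑ i ∈ Finset.range (M + 1), (T 1 : LaurentPolynomial (ZMod 2)) ^ i)) ^ 2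
      = ((1 + T M) * (1 + T ((M : ℤ) + 1))) ^ 2 := by
    rw [show ((1 : LaurentPolynomial (ZMod 2)) + T 1) ^ 4
        = (((1 : LaurentPolynomial (ZMod 2)) + T 1) * ((1 : LaurentPolynomial (ZMod 2)) + T 1)) ^ 2
        by ring]
    rw [← mul_pow, ← hA, ← hB]
    ring
  have e1 : (T ((M : ℤ) + 1) : LaurentPolynomial (ZMod 2)) = T (M : ℤ) * T 1 := T_add _ _
  have e2 : (T n : LaurentPolynomial (ZMod 2)) = T (M : ℤ) * (T (M : ℤ) * T 1) := by
    rw [← T_add, ← T_add, hn]; ring_nf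
  have expand : (((1 : LaurentPolynomial (ZMod 2)) + T M) * (1 + T ((M : ℤ) + 1))) ^ 2
      = 1 + T (2 * M) + T (2 * ((M : ℤ) + 1)) + T (2 * n) := by
    have h1 : ((1 : LaurentPolynomial (ZMod 2)) + T M) * (1 + T ((M : ℤ) + 1))
        = 1 + T M + T ((M : ℤ) + 1) + T n := by
      rw [e1, e2]; ring
    rw [h1,
      show ((1 : LaurentPolynomial (ZMod 2)) + T M + T ((M : ℤ) + 1) + T n)
        = ((1 + T M) + (T ((M : ℤ) + 1) + T n)) by ring,
      sq2, sq2, sq2, one_pow, T_sq, T_sq, T_sq]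
    ring
  calc (T n + T (-n) + (T 1 + T (-1)) : LaurentPolynomial (ZMod 2))
      = T (-n) * (1 + T (2 * M) + T (2 * ((M : ℤ) + 1)) + T (2 * n)) := by
        rw [mul_add, mul_add, mul_add, mul_one, ← T_add, ← T_add, ← T_add,
          show -n + 2 * (M : ℤ) = -1 by rw [hn]; ring,
          show -n + 2 * ((M : ℤ) + 1) = 1 by rw [hn]; ring,
          show -n + 2 * n = n by ring]
        ring
    _ = (1 + T 1) ^ 4 * (T (-n) *
          ((∑ i ∈ Finset.range M, (T 1 : LaurentPolynomial (ZMod 2)) ^ i) *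
            (∑ i ∈ Finset.range (M + 1), (T 1 : LaurentPolynomial (ZMod 2)) ^ i)) ^ 2) := by
        rw [show ((1 : LaurentPolynomial (ZMod 2)) + T 1) ^ 4 * (T (-n) *
              ((∑ i ∈ Finset.range M, (T 1 : LaurentPolynomial (ZMod 2)) ^ i) *
                (∑ i ∈ Finset.range (M + 1), (T 1 : LaurentPolynomial (ZMod 2)) ^ i)) ^ 2)
            = T (-n) * (((1 : LaurentPolynomial (ZMod 2)) + T 1) ^ 4 *
              ((∑ i ∈ Finset.range M, (T 1 : LaurentPolynomial (ZMod 2)) ^ i) *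
                (∑ i ∈ Finset.range (M + 1), (T 1 : LaurentPolynomial (ZMod 2)) ^ i)) ^ 2) by ring]
        rw [key, expand]

theorem exists_r_n (n : ℤ) (hn : 2 ≤ n) :
    ∃ r : LaurentPolynomial ℤ,
      cong2 (T n + T (-n) + (n : LaurentPolynomial ℤ) * (T 1 + T (-1)))
        ((1 + T 1) ^ 4 * r) ∧
      (Even n → 2 * eval1 r = n) ∧ (Odd n → eval1 r = 0) := by
  rcases Int.even_or_odd n with he | ho
  · -- even case
    obtain ⟨m, hm⟩ := he
    have hm0 : 0 ≤ m := by omega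
    set M : ℕ := m.toNat with hM
    have hMm : (M : ℤ) = m := Int.toNat_of_nonneg hm0
    refine ⟨T (-n) * (∑ i ∈ Finset.range M, (T 2 : LaurentPolynomial ℤ) ^ i) ^ 2
        + LaurentPolynomial.C (m - m ^ 2), ?_, ?_, ?_⟩
    · apply cong2_of_pi2
      have hcast : pi2 ((n : LaurentPolynomial ℤ)) = 0 := by
        rw [map_intCast, CharP.intCast_eq_zero_iff (LaurentPolynomial (ZMod 2)) 2 n]
        omega
      have hCterm : pi2 (LaurentPolynomial.C (m - m ^ 2)) = 0 := by
        rw [pi2_C]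
        have hdvd : (2 : ℤ) ∣ (m - m ^ 2) := by
          rcases Int.even_or_odd m with ⟨k, hk⟩ | ⟨k, hk⟩
          · exact ⟨k - 2 * k ^ 2, by rw [hk]; ring⟩
          · exact ⟨-2 * k ^ 2 - k, by rw [hk]; ring⟩
        have : ((m - m ^ 2 : ℤ) : ZMod 2) = 0 := by
          rw [ZMod.intCast_zmod_eq_zero_iff_dvd]; exact_mod_cast hdvd
        rw [this]; simp
      simp only [map_add, map_mul, map_pow, map_one, map_sum, pi2_T, hcast, hCterm]
      have hk := keyEven M
      rw [hMm, show m + m = n by omega] at hk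
      simpa using hk
    · intro _
      rw [eval1_eq_ee, map_add, map_mul, map_pow, map_sum, ee_T, ee_C]
      simp only [map_pow, ee_T, one_pow]
      rw [Finset.sum_const, Finset.card_range, nsmul_eq_mul, mul_one, hMm]
      have : (1 : ℤ) * m ^ 2 + (m - m ^ 2) = m := by ring
      rw [this]; omega
    · intro hodd
      exact ((Int.not_odd_iff_even.mpr ⟨m, hm⟩) hodd).elim
  · -- odd case
    obtain ⟨m, hm⟩ := ho
    have hm0 : 0 ≤ m := by omega
    set M : ℕ := m.toNat with hM
    have hMm : (M : ℤ) = m := Int.toNat_of_nonneg hm0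
    refine ⟨T (-n) * ((∑ i ∈ Finset.range M, (T 1 : LaurentPolynomial ℤ) ^ i) *
          (∑ i ∈ Finset.range (M + 1), (T 1 : LaurentPolynomial ℤ) ^ i)) ^ 2
        - LaurentPolynomial.C ((m * (m + 1)) ^ 2), ?_, ?_, ?_⟩
    · apply cong2_of_pi2
      have h2 : ((2 : ℕ) : LaurentPolynomial (ZMod 2)) = 0 :=
        CharP.cast_eq_zero (LaurentPolynomial (ZMod 2)) 2
      have h2' : ((2 : ℤ) : LaurentPolynomial (ZMod 2)) = 0 := by exact_mod_cast h2
      have hcast : pi2 ((n : LaurentPolynomial ℤ)) = 1 := by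
        rw [map_intCast, hm]
        push_cast
        rw [show (2 : LaurentPolynomial (ZMod 2)) = 0 by exact_mod_cast h2]
        ring
      simp only [map_add, map_sub, map_mul, map_pow, map_one, map_sum, pi2_T, hcast]
      rw [pi2_C]
      have hall : ∀ x : ZMod 2, x * (x + 1) = 0 := by decide
      have hz : (LaurentPolynomial.C ((m : ZMod 2)) *
          (LaurentPolynomial.C ((m : ZMod 2)) + 1)) ^ 2 = (0 : LaurentPolynomial (ZMod 2)) := by
        have hmul : LaurentPolynomial.C ((m : ZMod 2)) * (LaurentPolynomial.C ((m : ZMod 2)) + 1)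
            = LaurentPolynomial.C ((m : ZMod 2) * ((m : ZMod 2) + 1)) := by
          rw [map_mul, map_add, map_one]
        rw [hmul, hall, map_zero]
        ring
      rw [hz, sub_zero, one_mul]
      have hk := keyOdd M
      rw [hMm, show 2 * m + 1 = n by omega] at hk
      simpa using hk
    · intro hev
      exact ((Int.not_even_iff_odd.mpr ⟨m, hm⟩) hev).elim
    · intro _
      rw [eval1_eq_ee, map_sub, map_mul, map_pow, map_mul, map_sum, map_sum, ee_T, ee_C]
      simp only [map_pow, ee_T, one_pow]
      rw [Finset.sum_const, Finset.sum_const, Finset.card_range, Finset.card_range,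
        nsmul_eq_mul, nsmul_eq_mul, mul_one, mul_one]
      push_cast [hMm]
      ring
end

section
/- For all Laurent polynomials u, q ∈ ℤ[s,s⁻¹], one has φ(s·u·q̄ + q·ū + (1 + s)·u·ū) = u(1)·(q(1) + 1) in ℤ/2ℤ, where q̄ and ū denote the Laurent polynomials obtained from q and u by substituting s⁻¹ for s. -/
open LaurentPolynomial

/-- Formal derivative evaluated at `1`: `dsum (Σ aₖ sᵏ) = Σ aₖ k`. -/
noncomputable def dsum (g : LaurentPolynomial ℤ) : ℤ :=
  g.coeff.sum fun k a => a * k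

lemma phi_eq (g : LaurentPolynomial ℤ) : phi g = ((dsum g : ℤ) : ZMod 2) := rfl

lemma eval1_single (k a : ℤ) : eval1 (AddMonoidAlgebra.single k a) = a :=
  Finsupp.sum_single_index rfl

lemma dsum_single (k a : ℤ) : dsum (AddMonoidAlgebra.single k a) = a * k :=
  Finsupp.sum_single_index (zero_mul _)

lemma eval1_zero : eval1 (0 : LaurentPolynomial ℤ) = 0 := Finsupp.sum_zero_index

lemma dsum_zero : dsum (0 : LaurentPolynomial ℤ) = 0 := Finsupp.sum_zero_index

lemma eval1_add (f g : LaurentPolynomial ℤ) : eval1 (f + g) = eval1 f + eval1 g :=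
  Finsupp.sum_add_index' (fun _ => rfl) (fun _ _ _ => rfl)

lemma dsum_add (f g : LaurentPolynomial ℤ) : dsum (f + g) = dsum f + dsum g :=
  Finsupp.sum_add_index' (fun _ => zero_mul _) (fun _ _ _ => add_mul _ _ _)

lemma single_mul_single (k m a b : ℤ) :
    AddMonoidAlgebra.single k a * AddMonoidAlgebra.single m b =
      AddMonoidAlgebra.single (k + m) ((a * b : ℤ)) :=
  AddMonoidAlgebra.single_mul_single _ _ _ _

lemma eval1_mul (f g : LaurentPolynomial ℤ) : eval1 (f * g) = eval1 f * eval1 g := by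
  induction f using AddMonoidAlgebra.induction_linear with
  | zero => simp [eval1_zero, zero_mul]
  | add f₁ f₂ h1 h2 => rw [add_mul, eval1_add, eval1_add, h1, h2, add_mul]
  | single k a =>
    induction g using AddMonoidAlgebra.induction_linear with
    | zero => simp [eval1_zero, mul_zero]
    | add g₁ g₂ h1 h2 => rw [mul_add, eval1_add, eval1_add, h1, h2, mul_add]
    | single m b => rw [single_mul_single, eval1_single, eval1_single, eval1_single]

lemma dsum_mul (f g : LaurentPolynomial ℤ) :
    dsum (f * g) = dsum f * eval1 g + eval1 f * dsum g := by
  induction f using AddMonoidAlgebra.induction_linear with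
  | zero => simp [dsum_zero, eval1_zero, zero_mul]
  | add f₁ f₂ h1 h2 =>
      rw [add_mul, dsum_add, dsum_add, eval1_add, h1, h2]; ring
  | single k a =>
    induction g using AddMonoidAlgebra.induction_linear with
    | zero => simp [dsum_zero, eval1_zero, mul_zero]
    | add g₁ g₂ h1 h2 =>
        rw [mul_add, dsum_add, dsum_add, eval1_add, h1, h2]; ring
    | single m b =>
        rw [single_mul_single, dsum_single, dsum_single, dsum_single,
          eval1_single, eval1_single]; ring

lemma eval1_lbar (g : LaurentPolynomial ℤ) : eval1 (lbar g) = eval1 g :=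
  Finsupp.sum_mapDomain_index (fun _ => rfl) (fun _ _ _ => rfl)

lemma dsum_lbar (g : LaurentPolynomial ℤ) : dsum (lbar g) = - dsum g := by
  have : dsum (lbar g) = g.coeff.sum fun k a => a * (-k) :=
    Finsupp.sum_mapDomain_index (fun _ => zero_mul _) (fun _ _ _ => add_mul _ _ _)
  rw [this, dsum]
  simp [Finsupp.sum, mul_neg, Finset.sum_neg_distrib]

lemma T_eq (n : ℤ) : (T n : LaurentPolynomial ℤ) = AddMonoidAlgebra.single n 1 := rfl

lemma one_eq : (1 : LaurentPolynomial ℤ) = AddMonoidAlgebra.single 0 1 := rfl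

lemma eval1_T (n : ℤ) : eval1 (T n : LaurentPolynomial ℤ) = 1 := by
  rw [T_eq, eval1_single]

lemma dsum_T (n : ℤ) : dsum (T n : LaurentPolynomial ℤ) = n := by
  rw [T_eq, dsum_single, one_mul]

lemma eval1_one : eval1 (1 : LaurentPolynomial ℤ) = 1 := by
  rw [one_eq, eval1_single]

lemma dsum_one : dsum (1 : LaurentPolynomial ℤ) = 0 := by
  rw [one_eq, dsum_single, mul_zero]

theorem phi_combination (u q : LaurentPolynomial ℤ) :
    phi (T 1 * u * lbar q + q * lbar u + (1 + T 1) * u * lbar u) =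
      ((eval1 u * (eval1 q + 1) : ℤ) : ZMod 2) := by
  rw [phi_eq]
  have hd : dsum (T 1 * u * lbar q + q * lbar u + (1 + T 1) * u * lbar u) =
      eval1 u * eval1 q + eval1 u * eval1 u := by
    simp only [dsum_add, dsum_mul, eval1_mul, eval1_add, dsum_T, dsum_one,
      eval1_T, eval1_one, eval1_lbar, dsum_lbar]
    ring
  rw [hd]
  push_cast
  have hsq : ((eval1 u : ZMod 2)) * ((eval1 u : ZMod 2)) = (eval1 u : ZMod 2) := by
    have := ZMod.pow_card (p := 2) ((eval1 u : ZMod 2))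
    rwa [pow_two] at this
  rw [hsq]; ring
end

section
/- Let d ≥ 0 and m ≥ 2 be integers, let q₁, …, q_d, u₁, …, u_d ∈ ℤ[s,s⁻¹] be Laurent polynomials, let a₂, …, a_m be integers, and for each 2 ≤ n ≤ m let r̂_n ∈ ℤ[s,s⁻¹] be a Laurent polynomial with r̂_n(1) = n/2 if n is even and r̂_n(1) = 0 if n is odd. Suppose that (1 + s⁻¹) · Σ_{n=2}^{m} a_n · r̂_n(s) ≡ Σ_{i=1}^{d} ( s·u_i·q̄_i + q_i·ū_i + (1 + s)·u_i·ū_i ) modulo 2 in ℤ[s,s⁻¹], where q̄_i and ū_i denote the Laurent polynomials obtained from q_i and u_i by substituting s⁻¹ for s. Then Σ { a_n : 2 ≤ n ≤ m, n ≡ 2 (mod 4) } ≡ Σ { u_i(1) : 1 ≤ i ≤ d, q_i(1) is even } modulo 2. -/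
open LaurentPolynomial

/-! ### Auxiliary machinery: the mod-2 group algebra -/

noncomputable abbrev X2 := AddMonoidAlgebra (ZMod 2) (ZMod 2)

noncomputable def Phi : LaurentPolynomial ℤ →ₐ[ℤ] X2 :=
  AddMonoidAlgebra.lift ℤ X2 ℤ
    ((AddMonoidAlgebra.of (ZMod 2) (ZMod 2)).comp
      (AddMonoidHom.toMultiplicative (Int.castAddHom (ZMod 2))))

noncomputable def aug : X2 →ₐ[ZMod 2] ZMod 2 :=
  AddMonoidAlgebra.lift (ZMod 2) (ZMod 2) (ZMod 2) 1

noncomputable def tt : X2 := AddMonoidAlgebra.single (1 : ZMod 2) (1 : ZMod 2)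

lemma Phi_single (k a : ℤ) :
    Phi (AddMonoidAlgebra.single k a) = AddMonoidAlgebra.single (k : ZMod 2) (a : ZMod 2) := by
  rw [Phi, AddMonoidAlgebra.lift_single]
  show a • (AddMonoidAlgebra.single ((k : ZMod 2)) (1 : ZMod 2)) = _
  rw [AddMonoidAlgebra.smul_single, Int.smul_one_eq_cast]

lemma aug_single (k a : ZMod 2) : aug (AddMonoidAlgebra.single k a) = a := by
  rw [aug, AddMonoidAlgebra.lift_single]
  simp

lemma Phi_T (n : ℤ) : Phi (T n) = AddMonoidAlgebra.single (n : ZMod 2) 1 := by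
  rw [show (T n : LaurentPolynomial ℤ) = AddMonoidAlgebra.single n 1 from rfl, Phi_single, Int.cast_one]

lemma Phi_lbar (g : LaurentPolynomial ℤ) : Phi (lbar g) = Phi g := by
  induction g using AddMonoidAlgebra.induction_linear with
  | zero => simp [lbar]
  | add f g hf hg =>
      rw [lbar, AddMonoidAlgebra.coeff_add, Finsupp.mapDomain_add, AddMonoidAlgebra.ofCoeff_add,
        map_add, map_add, ← lbar, ← lbar, hf, hg]
  | single k a =>
      rw [lbar, AddMonoidAlgebra.coeff_single, Finsupp.mapDomain_single,
        AddMonoidAlgebra.ofCoeff_single, Phi_single, Phi_single]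
      norm_num

lemma aug_Phi (g : LaurentPolynomial ℤ) : aug (Phi g) = ((eval1 g : ℤ) : ZMod 2) := by
  induction g using AddMonoidAlgebra.induction_linear with
  | zero => simp [eval1]
  | add f g hf hg => rw [map_add, map_add, eval1_add, hf, hg]; push_cast; ring
  | single k a =>
      rw [Phi_single, aug_single]
      unfold eval1
      rw [AddMonoidAlgebra.coeff_single, Finsupp.sum_single_index rfl]

lemma coeff_one (x : X2) :
    (((1 : X2) + tt) * x).coeff 1 = aug x := by
  induction x using AddMonoidAlgebra.induction_linear with
  | zero => simp
  | add f g hf hg => rw [mul_add, AddMonoidAlgebra.coeff_add, Finsupp.add_apply, hf, hg, map_add]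
  | single k a =>
      rw [add_mul, one_mul, tt, AddMonoidAlgebra.single_mul_single, AddMonoidAlgebra.coeff_add,
        Finsupp.add_apply, aug_single, one_mul, AddMonoidAlgebra.coeff_single,
        AddMonoidAlgebra.coeff_single, Finsupp.single_apply, Finsupp.single_apply]
      fin_cases k <;> simp +decide
      · intro h; cases h
      · intro h; exact absurd rfl h

lemma intCast_even {x : ℤ} (h : Even x) : (x : ZMod 2) = 0 := by
  obtain ⟨k, rfl⟩ := h
  push_cast
  exact CharTwo.add_self_eq_zero _

lemma intCast_odd {x : ℤ} (h : ¬ Even x) : (x : ZMod 2) = 1 := by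
  have h2 := Int.not_even_iff.mp h
  obtain ⟨k, hk⟩ : ∃ k, x = (k + k) + 1 := ⟨x / 2, by omega⟩
  subst hk
  push_cast
  rw [CharTwo.add_self_eq_zero, zero_add]

lemma zmod_sq (z : ZMod 2) : z * z = z := by revert z; decide

theorem final_step (d m : ℕ) (hm : 2 ≤ m)
    (q u : ℕ → LaurentPolynomial ℤ) (a : ℕ → ℤ)
    (rhat : ℕ → LaurentPolynomial ℤ)
    (hr : ∀ n, 2 ≤ n → n ≤ m →
      (Even n → 2 * eval1 (rhat n) = (n : ℤ)) ∧ (¬ Even n → eval1 (rhat n) = 0))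
    (hcong : cong2
      ((1 + T (-1)) * ∑ n ∈ Finset.Icc 2 m, (a n : LaurentPolynomial ℤ) * rhat n)
      (∑ i ∈ Finset.Icc 1 d,
        (T 1 * u i * lbar (q i) + q i * lbar (u i) + (1 + T 1) * u i * lbar (u i)))) :
    ((∑ n ∈ (Finset.Icc 2 m).filter (fun n => n % 4 = 2), a n : ℤ) : ZMod 2) =
      ((∑ i ∈ (Finset.Icc 1 d).filter (fun i => Even (eval1 (q i))), eval1 (u i) : ℤ)
        : ZMod 2) := by
  obtain ⟨p, hp⟩ := hcong
  have h2 : (2 : X2) = 0 := by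
    rw [show (2 : X2) = algebraMap (ZMod 2) X2 2 from (map_ofNat _ 2).symm]
    rw [show (2 : ZMod 2) = 0 from rfl, map_zero]
  have hPhi : Phi ((1 + T (-1)) * ∑ n ∈ Finset.Icc 2 m, (a n : LaurentPolynomial ℤ) * rhat n)
      = Phi (∑ i ∈ Finset.Icc 1 d,
        (T 1 * u i * lbar (q i) + q i * lbar (u i) + (1 + T 1) * u i * lbar (u i))) := by
    have h2p : Phi (2 * p) = 0 := by
      rw [map_mul, show ((2 : LaurentPolynomial ℤ)) = ((2 : ℤ) : LaurentPolynomial ℤ) by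
        push_cast; rfl, map_intCast]
      push_cast [h2]
      exact zero_mul _
    have h := congrArg Phi hp
    rw [h2p, map_sub, sub_eq_zero] at h
    exact h
  -- compute the left side coefficient
  have hT1 : Phi (T (-1)) = tt := by
    rw [Phi_T]; norm_num; rfl
  have hT1' : Phi (T 1) = tt := by
    rw [Phi_T]; rfl
  have hL : (Phi ((1 + T (-1)) * ∑ n ∈ Finset.Icc 2 m,
        (a n : LaurentPolynomial ℤ) * rhat n)).coeff 1
      = ∑ n ∈ Finset.Icc 2 m, (a n : ZMod 2) * ((eval1 (rhat n) : ℤ) : ZMod 2) := by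
    have e1 : Phi (1 + T (-1)) = (1 : X2) + tt := by
      rw [map_add, hT1, map_one]
    rw [map_mul, e1, coeff_one, map_sum, map_sum]
    refine Finset.sum_congr rfl fun n _ => ?_
    simp only [map_mul, map_intCast, aug_Phi]
  have hR : (Phi (∑ i ∈ Finset.Icc 1 d,
        (T 1 * u i * lbar (q i) + q i * lbar (u i) + (1 + T 1) * u i * lbar (u i)))).coeff 1
      = ∑ i ∈ Finset.Icc 1 d,
        (((eval1 (u i) : ℤ) : ZMod 2) * ((eval1 (q i) : ℤ) : ZMod 2)
          + ((eval1 (u i) : ℤ) : ZMod 2) * ((eval1 (u i) : ℤ) : ZMod 2)) := by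
    rw [map_sum, AddMonoidAlgebra.coeff_sum, Finset.sum_apply']
    refine Finset.sum_congr rfl fun i _ => ?_
    have : Phi (T 1 * u i * lbar (q i) + q i * lbar (u i) + (1 + T 1) * u i * lbar (u i))
        = ((1 : X2) + tt) * (Phi (u i) * Phi (q i) + Phi (u i) * Phi (u i)) := by
      simp only [map_add, map_mul, map_one, hT1', Phi_lbar]
      ring
    rw [this, coeff_one, map_add, map_mul, map_mul, aug_Phi, aug_Phi]
  have hC : (Phi ((1 + T (-1)) * ∑ n ∈ Finset.Icc 2 m, (a n : LaurentPolynomial ℤ) * rhat n)).coeff 1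
      = (Phi (∑ i ∈ Finset.Icc 1 d,
          (T 1 * u i * lbar (q i) + q i * lbar (u i) + (1 + T 1) * u i * lbar (u i)))).coeff 1 :=
    congrArg (fun y : X2 => y.coeff 1) hPhi
  rw [hL, hR] at hC
  -- simplify left side: only n ≡ 2 mod 4 contribute
  have hLval : ∑ n ∈ Finset.Icc 2 m, (a n : ZMod 2) * ((eval1 (rhat n) : ℤ) : ZMod 2)
      = ∑ n ∈ (Finset.Icc 2 m).filter (fun n => n % 4 = 2), (a n : ZMod 2) := by
    rw [Finset.sum_filter]
    refine Finset.sum_congr rfl fun n hn => ?_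
    rw [Finset.mem_Icc] at hn
    obtain ⟨h1, h2⟩ := hr n hn.1 hn.2
    by_cases he : Even n
    · have h3 := h1 he
      by_cases h4 : n % 4 = 2
      · have : ¬ Even (eval1 (rhat n)) := by
          rw [Int.even_iff]
          obtain ⟨c, hc⟩ := he
          omega
        rw [intCast_odd this, mul_one, if_pos h4]
      · have : Even (eval1 (rhat n)) := by
          rw [Int.even_iff]
          have h5 : n % 2 = 0 := by
            obtain ⟨c, hc⟩ := he; omega
          omega
        rw [intCast_even this, mul_zero, if_neg h4]
    · have h4 : ¬ n % 4 = 2 := by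
        rw [Nat.even_iff] at he
        omega
      rw [h2 he, Int.cast_zero, mul_zero, if_neg h4]
  -- simplify right side
  have hRval : ∑ i ∈ Finset.Icc 1 d,
        (((eval1 (u i) : ℤ) : ZMod 2) * ((eval1 (q i) : ℤ) : ZMod 2)
          + ((eval1 (u i) : ℤ) : ZMod 2) * ((eval1 (u i) : ℤ) : ZMod 2))
      = ∑ i ∈ (Finset.Icc 1 d).filter (fun i => Even (eval1 (q i))),
          ((eval1 (u i) : ℤ) : ZMod 2) := by
    rw [Finset.sum_filter]
    refine Finset.sum_congr rfl fun i _ => ?_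
    by_cases he : Even (eval1 (q i))
    · rw [intCast_even he, mul_zero, zero_add, zmod_sq, if_pos he]
    · rw [intCast_odd he, mul_one, zmod_sq, if_neg he]
      rw [CharTwo.add_self_eq_zero]
  rw [hLval, hRval] at hC
  push_cast
  exact hC
end
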